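/- Let L be a Hermitian linear map on M_N(ℂ). Then both L and −L are QMS generators if and only if there exists a self-adjoint H ∈ M_N(ℂ) such that L(A) = i(HA − AH) for all A ∈ M_N(ℂ). -/

import Mathlib

open MeasureTheory Matrix
open NormedSpace
open scoped ComplexOrder

noncomputable section

/-- The algebra of `N × N` complex matrices. -/
abbrev Mat (N : ℕ) := Matrix (Fin N) (Fin N) ℂ

variable {N : ℕ}

/-- Real power `σ^s` of a positive definite matrix, defined via the spectral decomposition. -/
noncomputable def mpow (σ : Mat N) (hσ : σ.PosDef) (s : ℝ) : Mat N :=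
  (hσ.1.eigenvectorUnitary : Mat N) *
    Matrix.diagonal (fun i => ((hσ.1.eigenvalues i ^ s : ℝ) : ℂ)) *
    star (hσ.1.eigenvectorUnitary : Mat N)

/-- Complete positivity of a linear map on `M_N(ℂ)`: existence of a Kraus representation. -/
def IsCP (Φ : Mat N →ₗ[ℂ] Mat N) : Prop :=
  ∃ (M : ℕ) (V : Fin M → Mat N), ∀ A, Φ A = ∑ j, (V j)ᴴ * A * V j

/-- The KMS inner product `⟨B,A⟩_KMS = Tr[Bᴴ σ^{1/2} A σ^{1/2}]`. -/
def kmsInner (σ : Mat N) (hσ : σ.PosDef) (B A : Mat N) : ℂ :=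
  (Bᴴ * mpow σ hσ (1/2) * A * mpow σ hσ (1/2)).trace

/-- Self-adjointness with respect to the KMS inner product. -/
def IsKMSSelfAdjoint (σ : Mat N) (hσ : σ.PosDef) (Φ : Mat N →ₗ[ℂ] Mat N) : Prop :=
  ∀ A B, kmsInner σ hσ B (Φ A) = kmsInner σ hσ (Φ B) A

/-- The standard basis of the matrix space. -/
def matBasis (N : ℕ) : Module.Basis (Fin N × Fin N) ℂ (Mat N) := Matrix.stdBasis ℂ (Fin N) (Fin N)

/-- The semigroup `e^{tL}` generated by a linear map `L` on `M_N(ℂ)`. -/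
def semigroup (L : Mat N →ₗ[ℂ] Mat N) (t : ℝ) : Mat N →ₗ[ℂ] Mat N :=
  Matrix.toLin (matBasis N) (matBasis N)
    (NormedSpace.exp ((t : ℂ) • LinearMap.toMatrix (matBasis N) (matBasis N) L))

/-- `L` is a QMS generator: for every `t ≥ 0`, `e^{tL}` is completely positive and unital. -/
def IsQMSGen (L : Mat N →ₗ[ℂ] Mat N) : Prop :=
  ∀ t : ℝ, 0 ≤ t → IsCP (semigroup L t) ∧ semigroup L t 1 = 1

attribute [local instance] Matrix.linftyOpNormedRing Matrix.linftyOpNormedAlgebra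

lemma semigroup_neg (L : Mat N →ₗ[ℂ] Mat N) (t : ℝ) : semigroup (-L) t = semigroup L (-t) := by
  unfold semigroup
  congr 1
  congr 1
  rw [map_neg]
  push_cast
  module

lemma semigroup_zero (L : Mat N →ₗ[ℂ] Mat N) (A : Mat N) : semigroup L 0 A = A := by
  unfold semigroup
  rw [Complex.ofReal_zero, zero_smul, exp_zero]
  simp [Matrix.toLin_one]


lemma semigroup_hasDerivAt (L : Mat N →ₗ[ℂ] Mat N) (A : Mat N) :
    HasDerivAt (fun t : ℝ => semigroup L t A) (L A) 0 := by
  set M := LinearMap.toMatrix (matBasis N) (matBasis N) L with hM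
  let φ : Matrix (Fin N × Fin N) (Fin N × Fin N) ℂ →ₗ[ℝ] Mat N :=
    (((LinearMap.applyₗ A).comp (Matrix.toLin (matBasis N) (matBasis N)).toLinearMap).restrictScalars ℝ)
  have h1 : ∀ t : ℝ, semigroup L t A = φ.toContinuousLinearMap (exp (t • M)) := by
    intro t
    have : exp (t • M) = exp ((t:ℂ) • M) := by rw [Complex.coe_smul]
    simp only [this]
    rfl
  have hE : HasDerivAt (fun u : ℝ => exp (u • M)) (M * exp ((0:ℝ) • M)) 0 :=
    hasDerivAt_exp_smul_const' M 0
  have hE' : HasDerivAt (fun u : ℝ => exp (u • M)) M 0 := by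
    simpa [zero_smul, exp_zero] using hE
  have := (φ.toContinuousLinearMap.hasFDerivAt.comp_hasDerivAt 0 hE')
  have h2 : φ.toContinuousLinearMap M = L A := by
    show Matrix.toLin (matBasis N) (matBasis N) M A = L A
    rw [hM, Matrix.toLin_toMatrix]
  replace this := this.congr_deriv h2
  exact this.congr_of_eventuallyEq (by filter_upwards with t; exact h1 t)

lemma quad_zero {D : Mat N} (h : ∀ x : Fin N → ℂ, star x ⬝ᵥ D.mulVec x = 0) : D = 0 := by
  have h2 : Matrix.toEuclideanLin D = 0 := by
    rw [← inner_map_self_eq_zero]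
    intro x
    set y : Fin N → ℂ := x.ofLp with hy
    have hx := h y
    rw [EuclideanSpace.inner_eq_star_dotProduct]
    have : (Matrix.toEuclideanLin D x).ofLp = D.mulVec y := rfl
    rw [this]
    have h3 : y ⬝ᵥ star (D.mulVec y) = star (star y ⬝ᵥ D.mulVec y) := by
      simp [dotProduct, star_sum, mul_comm]
    rw [h3, hx, star_zero]
  have := Matrix.toEuclideanLin.injective (by rw [h2, map_zero] : Matrix.toEuclideanLin D = Matrix.toEuclideanLin 0)
  exact this

lemma star_dot_self (y : Fin N → ℂ) :
    0 ≤ (star y ⬝ᵥ y).re ∧ (star y ⬝ᵥ y).im = 0 := by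
  have : star y ⬝ᵥ y = ((∑ i, Complex.normSq (y i) : ℝ) : ℂ) := by
    push_cast
    simp only [dotProduct, Pi.star_apply, Complex.star_def]
    exact Finset.sum_congr rfl fun i _ => (Complex.normSq_eq_conj_mul_self).symm
  rw [this]
  constructor
  · rw [Complex.ofReal_re]
    exact Finset.sum_nonneg fun i _ => Complex.normSq_nonneg _
  · rw [Complex.ofReal_im]

lemma kraus_schwarz (Φ : Mat N →ₗ[ℂ] Mat N) (M : ℕ) (V : Fin M → Mat N)
    (hV : ∀ A, Φ A = ∑ j, (V j)ᴴ * A * V j) (hone : Φ 1 = 1) (A : Mat N) (x : Fin N → ℂ) :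
    0 ≤ (star x ⬝ᵥ (Φ (Aᴴ*A) - (Φ A)ᴴ * Φ A).mulVec x).re ∧
      (star x ⬝ᵥ (Φ (Aᴴ*A) - (Φ A)ᴴ * Φ A).mulVec x).im = 0 := by
  have hsum : ∑ j, (V j)ᴴ * V j = 1 := by
    have := hone
    rw [hV 1] at this
    simpa [mul_one] using this
  have hstar : Φ Aᴴ = (Φ A)ᴴ := by
    rw [hV Aᴴ, hV A, conjTranspose_sum]
    exact Finset.sum_congr rfl fun j _ => by
      simp [conjTranspose_mul, mul_assoc]
  have key : Φ (Aᴴ*A) - (Φ A)ᴴ * Φ A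
      = ∑ j, ((A * V j - V j * Φ A)ᴴ * (A * V j - V j * Φ A)) := by
    have e1 : ∀ j : Fin M, (A * V j - V j * Φ A)ᴴ * (A * V j - V j * Φ A)
        = (V j)ᴴ * (Aᴴ*A) * V j - ((V j)ᴴ * Aᴴ * V j) * Φ A
          - (Φ A)ᴴ * ((V j)ᴴ * A * V j) + (Φ A)ᴴ * ((V j)ᴴ * V j) * Φ A := by
      intro j
      simp only [conjTranspose_sub, conjTranspose_mul]
      noncomm_ring
    rw [Finset.sum_congr rfl (fun j _ => e1 j)]
    simp only [Finset.sum_add_distrib, Finset.sum_sub_distrib, ← Finset.sum_mul,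
      ← Finset.mul_sum]
    rw [← hV (Aᴴ*A), ← hV A]
    have h4 : ∑ j, (V j)ᴴ * Aᴴ * V j = Φ Aᴴ := (hV Aᴴ).symm
    rw [h4, hstar, hsum, mul_one]
    noncomm_ring
  rw [key]
  have expand : star x ⬝ᵥ (∑ j, ((A * V j - V j * Φ A)ᴴ * (A * V j - V j * Φ A))).mulVec x
      = ∑ j, star ((A * V j - V j * Φ A).mulVec x) ⬝ᵥ ((A * V j - V j * Φ A).mulVec x) := by
    have hgen : ∀ s : Finset (Fin M), ∀ f : Fin M → Mat N,
        star x ⬝ᵥ (∑ j ∈ s, f j).mulVec x = ∑ j ∈ s, star x ⬝ᵥ (f j).mulVec x := by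
      intro s
      induction s using Finset.cons_induction with
      | empty => intro f; simp
      | cons a s ha ih =>
        intro f
        rw [Finset.sum_cons, Finset.sum_cons, Matrix.add_mulVec, dotProduct_add, ih f]
    rw [hgen]
    exact Finset.sum_congr rfl fun j _ => by
      rw [← Matrix.mulVec_mulVec, Matrix.dotProduct_mulVec, ← Matrix.star_mulVec]
  rw [expand]
  constructor
  · rw [Complex.re_sum]
    exact Finset.sum_nonneg fun j _ => (star_dot_self _).1
  · rw [Complex.im_sum]
    exact Finset.sum_eq_zero fun j _ => (star_dot_self _).2

def dotL (x : Fin N → ℂ) : Mat N →ₗ[ℂ] ℂ where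
  toFun B := star x ⬝ᵥ B.mulVec x
  map_add' B C := by simp [Matrix.add_mulVec, dotProduct_add]
  map_smul' c B := by simp [Matrix.smul_mulVec, dotProduct_smul]

def myStarL (N : ℕ) : Mat N →ₗ[ℝ] Mat N where
  toFun := star
  map_add' := star_add
  map_smul' r B := by simp only [RingHom.id_apply]; exact (star_smul r B).trans (by rw [star_trivial])

lemma dissipation_zero (L : Mat N →ₗ[ℂ] Mat N) (hL : IsQMSGen L) (hL' : IsQMSGen (-L))
    (A : Mat N) : L (Aᴴ*A) = (L A)ᴴ*A + Aᴴ*(L A) := by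
  rw [← sub_eq_zero]
  apply quad_zero
  intro x
  set D : Mat N := L (Aᴴ*A) - ((L A)ᴴ*A + Aᴴ*(L A)) with hD
  set g : ℝ → ℂ := fun t =>
    star x ⬝ᵥ ((semigroup L t (Aᴴ*A)) - (semigroup L t A)ᴴ * (semigroup L t A)).mulVec x with hg
  -- derivative of g at 0
  have hd1 : HasDerivAt (fun t => semigroup L t (Aᴴ*A)) (L (Aᴴ*A)) 0 :=
    semigroup_hasDerivAt L (Aᴴ*A)
  have hd2 : HasDerivAt (fun t => semigroup L t A) (L A) 0 := semigroup_hasDerivAt L A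
  have hds : HasDerivAt (fun t => (semigroup L t A)ᴴ) ((L A)ᴴ) 0 := by
    have := ((myStarL N).toContinuousLinearMap.hasFDerivAt.comp_hasDerivAt 0 hd2)
    exact this
  have hdm : HasDerivAt (fun t => (semigroup L t A)ᴴ * (semigroup L t A))
      ((L A)ᴴ * A + Aᴴ * (L A)) 0 := by
    have := hds.mul hd2
    simp only [semigroup_zero] at this
    exact this
  have hdiff : HasDerivAt (fun t => (semigroup L t (Aᴴ*A)) - (semigroup L t A)ᴴ * (semigroup L t A)) D 0 :=
    hd1.sub hdm
  have hdg : HasDerivAt g (star x ⬝ᵥ D.mulVec x) 0 := by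
    have := (((dotL x).restrictScalars ℝ).toContinuousLinearMap.hasFDerivAt.comp_hasDerivAt 0 hdiff)
    exact this
  -- g is real and nonnegative
  have props : ∀ t : ℝ, 0 ≤ (g t).re ∧ (g t).im = 0 := by
    intro t
    have hcp : IsCP (semigroup L t) ∧ semigroup L t 1 = 1 := by
      rcases le_or_gt 0 t with h | h
      · exact hL t h
      · have := hL' (-t) (by linarith)
        rwa [semigroup_neg, neg_neg] at this
    obtain ⟨⟨M, V, hV⟩, hone⟩ := hcp
    exact kraus_schwarz (semigroup L t) M V hV hone A x
  have g0 : g 0 = 0 := by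
    simp only [hg, semigroup_zero]
    simp
  -- real part has a local min at 0
  have hre : HasDerivAt (fun t => (g t).re) (star x ⬝ᵥ D.mulVec x).re 0 :=
    Complex.reCLM.hasFDerivAt.comp_hasDerivAt 0 hdg
  have hmin : IsLocalMin (fun t => (g t).re) 0 :=
    Filter.Eventually.of_forall fun t => by simp only []; rw [g0, Complex.zero_re]; exact (props t).1
  have hre0 : (star x ⬝ᵥ D.mulVec x).re = 0 := hmin.hasDerivAt_eq_zero hre
  have him : HasDerivAt (fun t => (g t).im) (star x ⬝ᵥ D.mulVec x).im 0 :=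
    Complex.imCLM.hasFDerivAt.comp_hasDerivAt 0 hdg
  have heq : (fun t => (g t).im) = fun _ => (0:ℝ) := funext fun t => (props t).2
  rw [heq] at him
  have him0 : (star x ⬝ᵥ D.mulVec x).im = 0 := ((hasDerivAt_const (0:ℝ) (0:ℝ)).unique him).symm
  exact Complex.ext hre0 him0

lemma leibniz (L : Mat N →ₗ[ℂ] Mat N) (hherm : ∀ A, L Aᴴ = (L A)ᴴ)
    (hdis : ∀ A : Mat N, L (Aᴴ*A) = (L A)ᴴ*A + Aᴴ*(L A)) :
    ∀ B A : Mat N, L (B*A) = L B * A + B * L A := by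
  have hdis' : ∀ A : Mat N, L (Aᴴ*A) = L Aᴴ * A + Aᴴ * L A := fun A => by
    rw [hdis A, ← hherm A]
  set f : Mat N → Mat N → Mat N := fun A B => L (Aᴴ*B) - (L Aᴴ * B + Aᴴ * L B) with hf
  have hf0 : ∀ A, f A A = 0 := fun A => sub_eq_zero.mpr (hdis' A)
  have hexp : ∀ A B : Mat N, f (A+B) (A+B) = f A A + f A B + f B A + f B B := by
    intro A B
    simp only [hf, conjTranspose_add, add_mul, mul_add, map_add]
    abel
  have hadd : ∀ A B : Mat N, f A B + f B A = 0 := by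
    intro A B
    have h1 := hf0 (A+B)
    rw [hexp A B, hf0 A, hf0 B] at h1
    simpa using h1
  have fsmul2 : ∀ A B : Mat N, f A (Complex.I • B) = Complex.I • f A B := by
    intro A B
    simp only [hf, Matrix.mul_smul, LinearMap.map_smul, smul_add, smul_sub]
  have fsmul1 : ∀ A B : Mat N, f (Complex.I • A) B = (-Complex.I) • f A B := by
    intro A B
    have hct : (Complex.I • A)ᴴ = (-Complex.I) • Aᴴ := by
      rw [conjTranspose_smul, Complex.star_def, Complex.conj_I]
    simp only [hf, hct, Matrix.smul_mul, LinearMap.map_smul, smul_add, smul_sub]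
  have heq : ∀ A B : Mat N, f A B = f B A := by
    intro A B
    have h1 := hf0 (A + Complex.I • B)
    rw [hexp A (Complex.I • B), hf0 A, fsmul2 A B, fsmul1 B A] at h1
    have h2 : f (Complex.I • B) (Complex.I • B) = f B B := by
      rw [fsmul1, fsmul2, smul_smul]
      simp
    rw [h2, hf0 B] at h1
    have h4 : Complex.I • f A B = Complex.I • f B A := by
      have h5 : Complex.I • f A B + -(Complex.I • f B A) = 0 := by
        calc Complex.I • f A B + -(Complex.I • f B A)
            = 0 + Complex.I • f A B + (-Complex.I) • f B A + 0 := by rw [neg_smul]; abel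
          _ = 0 := h1
      have := add_neg_eq_zero.mp h5
      exact this
    exact smul_right_injective _ Complex.I_ne_zero h4
  have hzero : ∀ A B : Mat N, f A B = 0 := by
    intro A B
    have h1 := hadd A B
    rw [← heq A B] at h1
    have h2 : (2:ℂ) • f A B = 0 := by rw [two_smul]; exact h1
    rcases smul_eq_zero.mp h2 with h | h
    · norm_num at h
    · exact h
  intro B A
  have h6 := hzero Bᴴ A
  simp only [hf, conjTranspose_conjTranspose] at h6
  exact sub_eq_zero.mp h6

lemma one_eq_sum_units (N : ℕ) : (1 : Mat N) = ∑ k, single k k 1 := by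
  ext a b
  by_cases h : a = b
  · subst h
    simp [Matrix.sum_apply, Matrix.single, Matrix.one_apply]
  · simp [Matrix.sum_apply, Matrix.single, Matrix.one_apply, h]
    rw [Finset.filter_eq_empty_iff.mpr]
    · simp
    · rintro k - ⟨rfl, rfl⟩
      exact h rfl

lemma derivation_inner (hN : 0 < N) (L : Mat N →ₗ[ℂ] Mat N)
    (hleib : ∀ B A : Mat N, L (B*A) = L B * A + B * L A) :
    ∃ K : Mat N, ∀ A, L A = K * A - A * K := by
  set z : Fin N := ⟨0, hN⟩
  set K : Mat N := ∑ k, L (single k z 1) * single z k 1 with hK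
  refine ⟨K, ?_⟩
  set R : Mat N →ₗ[ℂ] Mat N := LinearMap.mulLeft ℂ K - LinearMap.mulRight ℂ K with hR
  have main : L = R := by
    apply (matBasis N).ext
    rintro ⟨i, j⟩
    have hb : (matBasis N) (i, j) = single i j 1 := Matrix.stdBasis_eq_single ℂ i j
    rw [hb]
    have hK1 : K * single i j 1 = L (single i z 1) * single z j 1 := by
      rw [hK, Finset.sum_mul]
      rw [Finset.sum_eq_single i]
      · rw [mul_assoc, single_mul_single_same, one_mul]
      · intro k _ hk
        rw [mul_assoc, single_mul_single_of_ne (h := hk), mul_zero]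
      · simp
    have hcross : ∀ k : Fin N, single i j 1 * L (single k z 1)
        = L (single i j 1 * single k z 1) - L (single i j 1) * single k z 1 := by
      intro k
      rw [hleib (single i j 1) (single k z 1)]
      abel
    have hK2 : single i j 1 * K
        = L (single i z 1) * single z j 1 - L (single i j 1) := by
      rw [hK, Finset.mul_sum]
      have : ∀ k : Fin N, single i j 1 * (L (single k z 1) * single z k 1)
          = (L (single i j 1 * single k z 1)) * single z k 1
            - L (single i j 1) * (single k z 1 * single z k 1) := by
        intro k
        rw [← mul_assoc, hcross k, sub_mul, mul_assoc]
      rw [Finset.sum_congr rfl fun k _ => this k, Finset.sum_sub_distrib]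
      congr 1
      · rw [Finset.sum_eq_single j]
        · rw [single_mul_single_same, one_mul]
        · intro k _ hk
          rw [single_mul_single_of_ne (h := Ne.symm hk), map_zero, zero_mul]
        · simp
      · rw [← Finset.mul_sum]
        have hsum : ∑ k : Fin N, single k z 1 * single z k (1:ℂ)
            = ∑ k : Fin N, single k k 1 := by
          exact Finset.sum_congr rfl fun k _ => by rw [single_mul_single_same, one_mul]
        rw [hsum, ← one_eq_sum_units, mul_one]
    rw [hR]
    simp only [LinearMap.sub_apply, LinearMap.mulLeft_apply, LinearMap.mulRight_apply]
    rw [hK1, hK2]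
    abel
  intro A
  rw [main]
  simp [hR]

lemma scalar_of_center {S : Mat N} (hc : ∀ B : Mat N, S * B = B * S) : ∃ c : ℂ, S = c • 1 := by
  obtain ⟨c, hc'⟩ := Matrix.mem_range_scalar_of_commute_single
    (M := S) (fun i j _ => (hc _).symm)
  refine ⟨c, ?_⟩
  rw [← hc']
  ext a b
  simp [Matrix.scalar_apply, Matrix.one_apply, Matrix.diagonal]

lemma herm_commutator (hN : 0 < N) (L : Mat N →ₗ[ℂ] Mat N) (hherm : ∀ A, L Aᴴ = (L A)ᴴ)
    (K : Mat N) (hK : ∀ A, L A = K * A - A * K) :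
    ∃ H : Mat N, H.IsHermitian ∧ ∀ A, L A = Complex.I • (H * A - A * H) := by
  have hcomm : ∀ B : Mat N, (K + Kᴴ) * B = B * (K + Kᴴ) := by
    intro B
    have h1 := hherm Bᴴ
    rw [conjTranspose_conjTranspose] at h1
    rw [hK B, hK Bᴴ] at h1
    rw [conjTranspose_sub, conjTranspose_mul, conjTranspose_mul,
      conjTranspose_conjTranspose] at h1
    -- h1 : K * B - B * K = B * Kᴴ - Kᴴ * B
    have h2 : (K + Kᴴ) * B - B * (K + Kᴴ) = (K * B - B * K) - (B * Kᴴ - Kᴴ * B) := by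
      rw [add_mul, mul_add]; abel
    rw [← sub_eq_zero, h2, h1, sub_self]
  obtain ⟨c, hc⟩ := scalar_of_center hcomm
  set z : Fin N := ⟨0, hN⟩
  have hcreal : (starRingEnd ℂ) c = c := by
    have h1 : (K + Kᴴ)ᴴ = K + Kᴴ := by rw [conjTranspose_add, conjTranspose_conjTranspose, add_comm]
    rw [hc, conjTranspose_smul, conjTranspose_one] at h1
    have := congrFun (congrFun (congrArg (fun M : Mat N => (M : Matrix (Fin N) (Fin N) ℂ)) h1) z) z
    simpa [Matrix.one_apply, Complex.star_def] using this
  refine ⟨(-Complex.I) • (K - (c/2) • 1), ?_, ?_⟩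
  · show ((-Complex.I) • (K - (c/2) • 1))ᴴ = (-Complex.I) • (K - (c/2) • 1)
    rw [conjTranspose_smul, conjTranspose_sub, conjTranspose_smul, conjTranspose_one]
    have hKH : Kᴴ = c • 1 - K := by rw [← hc]; abel
    rw [hKH]
    have : (starRingEnd ℂ) (c/2) = c/2 := by
      rw [map_div₀, hcreal, Complex.conj_ofNat]
    simp only [Complex.star_def, Complex.conj_neg_I, this]
    match_scalars <;> simp <;> ring
  · intro A
    rw [hK A]
    have expand : ((K - (c/2) • 1) * A - A * (K - (c/2) • 1)) = K * A - A * K := by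
      rw [sub_mul, mul_sub, Matrix.smul_mul, Matrix.mul_smul, one_mul, mul_one]
      abel
    have : Complex.I * (-Complex.I) = 1 := by
      rw [mul_neg, Complex.I_mul_I, neg_neg]
    rw [Matrix.smul_mul, Matrix.mul_smul, ← smul_sub, smul_smul, this, one_smul, expand]

def rmulAlgHom (N : ℕ) : Mat N →ₐ[ℂ] Module.End ℂ (Mat N) where
  toFun Y := LinearMap.mulRight ℂ Yᵀ
  map_one' := by ext A; simp
  map_mul' Y Z := by
    ext A
    simp [LinearMap.mulRight_apply, Module.End.mul_apply, Matrix.transpose_mul, mul_assoc]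
  map_zero' := by ext A; simp
  map_add' Y Z := by ext A; simp [LinearMap.mulRight_apply, Matrix.mul_add]
  commutes' c := by
    ext A
    simp [LinearMap.mulRight_apply, Module.algebraMap_end_apply, Algebra.algebraMap_eq_smul_one]

lemma gen_of_comm (H : Mat N) (hH : H.IsHermitian) (L : Mat N →ₗ[ℂ] Mat N)
    (hL : ∀ A, L A = Complex.I • (H * A - A * H)) : IsQMSGen L := by
  set X : Mat N := Complex.I • H with hX
  have hXH : Xᴴ = -X := by
    rw [hX, conjTranspose_smul, Complex.star_def, Complex.conj_I, hH.eq, neg_smul]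
  have hL' : ∀ A, L A = X * A - A * X := by
    intro A
    rw [hL A, hX, smul_sub, Matrix.smul_mul, Matrix.mul_smul]
  set U : ℝ → Mat N := fun s => NormedSpace.exp ((s:ℂ) • X) with hU
  have hUstar : ∀ s : ℝ, (U s)ᴴ = U (-s) := by
    intro s
    rw [hU]
    simp only []
    rw [← Matrix.exp_conjTranspose]
    congr 1
    rw [conjTranspose_smul, hXH, Complex.star_def, Complex.conj_ofReal]
    push_cast
    module
  have hUmul : ∀ s : ℝ, U s * U (-s) = 1 := by
    intro s
    rw [hU]
    simp only []
    rw [← Matrix.exp_add_of_commute _ _ (((Commute.refl X).smul_left _).smul_right _)]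
    have h9 : ((s:ℝ):ℂ) • X + ((-s:ℝ):ℂ) • X = 0 := by push_cast; module
    rw [h9, NormedSpace.exp_zero]
  -- the key computation
  have key : ∀ t : ℝ, ∀ A, semigroup L t A = U t * A * U (-t) := by
    intro t A
    set e := LinearMap.toMatrixAlgEquiv (matBasis N) with he
    set Y : Mat N := (t:ℂ) • X with hY
    have hdecomp : (t:ℂ) • L = (Algebra.lmul ℂ (Mat N)) Y + (rmulAlgHom N) (-Y)ᵀ := by
      apply LinearMap.ext
      intro B
      simp only [LinearMap.smul_apply, LinearMap.add_apply, Algebra.coe_lmul_eq_mul,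
        LinearMap.mul_apply', rmulAlgHom, AlgHom.coe_mk, RingHom.coe_mk, MonoidHom.coe_mk,
        OneHom.coe_mk, LinearMap.mulRight_apply, Matrix.transpose_transpose]
      rw [hL' B, hY]
      simp [hX, smul_sub, Matrix.smul_mul, Matrix.mul_smul, sub_eq_add_neg]
    have h1 : Continuous (e.toAlgHom.comp (Algebra.lmul ℂ (Mat N))) := by
      exact (e.toAlgHom.comp (Algebra.lmul ℂ (Mat N))).toLinearMap.continuous_of_finiteDimensional
    have h2 : Continuous (e.toAlgHom.comp (rmulAlgHom N)) := by
      exact (e.toAlgHom.comp (rmulAlgHom N)).toLinearMap.continuous_of_finiteDimensional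
    have hcomm : Commute (e ((Algebra.lmul ℂ (Mat N)) Y)) (e ((rmulAlgHom N) (-Y)ᵀ)) := by
      apply Commute.map _ e.toAlgHom
      show _ * _ = _ * _
      ext B
      simp [Module.End.mul_apply, Algebra.coe_lmul_eq_mul, LinearMap.mul_apply',
        rmulAlgHom, LinearMap.mulRight_apply, Matrix.transpose_transpose, Matrix.mul_assoc]
    have hsg : semigroup L t A
        = Matrix.toLin (matBasis N) (matBasis N) (NormedSpace.exp (e ((t:ℂ) • L))) A := by
      unfold semigroup
      rw [_root_.map_smul]
      rfl
    have hexp1 : NormedSpace.exp (e ((Algebra.lmul ℂ (Mat N)) Y))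
        = e ((Algebra.lmul ℂ (Mat N)) (NormedSpace.exp Y)) := by
      have := (NormedSpace.map_exp (e.toAlgHom.comp (Algebra.lmul ℂ (Mat N))) h1 Y).symm
      simp at this
      exact this
    have hexp2 : NormedSpace.exp (e ((rmulAlgHom N) (-Y)ᵀ))
        = e ((rmulAlgHom N) ((NormedSpace.exp (-Y))ᵀ)) := by
      have := (NormedSpace.map_exp (e.toAlgHom.comp (rmulAlgHom N)) h2 (-Y)ᵀ).symm
      have ht : NormedSpace.exp (-Y)ᵀ = (NormedSpace.exp (-Y))ᵀ := Matrix.exp_transpose _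
      rw [← ht]
      simp at this ⊢
      exact this
    have hbig : NormedSpace.exp (e ((t:ℂ) • L))
        = e ((Algebra.lmul ℂ (Mat N)) (U t) * (rmulAlgHom N) ((U (-t))ᵀ)) := by
      have hea : NormedSpace.exp (e ((Algebra.lmul ℂ (Mat N)) Y) + e ((rmulAlgHom N) (-Y)ᵀ))
          = NormedSpace.exp (e ((Algebra.lmul ℂ (Mat N)) Y))
            * NormedSpace.exp (e ((rmulAlgHom N) (-Y)ᵀ)) := NormedSpace.exp_add_of_commute hcomm
      rw [hdecomp, map_add, hea, hexp1, hexp2, ← _root_.map_mul]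
      have hUt : NormedSpace.exp Y = U t := by rw [hU, hY]
      have hUmt : NormedSpace.exp (-Y) = U (-t) := by
        rw [hU, hY]
        congr 1
        push_cast
        module
      rw [hUt, hUmt]
    rw [hsg, hbig]
    have hback : ∀ f : Module.End ℂ (Mat N), Matrix.toLin (matBasis N) (matBasis N) (e f) = f := by
      intro f
      show Matrix.toLinAlgEquiv (matBasis N) (e f) = f
      rw [he, ← LinearMap.toMatrixAlgEquiv_symm, AlgEquiv.symm_apply_apply]
    rw [hback]
    simp [Module.End.mul_apply, Algebra.coe_lmul_eq_mul, LinearMap.mul_apply',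
      rmulAlgHom, LinearMap.mulRight_apply, Matrix.transpose_transpose, Matrix.mul_assoc]
  intro t ht
  constructor
  · refine ⟨1, fun _ => U (-t), fun A => ?_⟩
    rw [key t A, Fin.sum_univ_one]
    rw [show (U (-t))ᴴ = U t from by rw [hUstar, neg_neg]]
  · rw [key t 1, mul_one, hUmul]

/-- For a Hermitian linear map `L` on `M_N(ℂ)` (i.e. `L(Aᴴ) = (L A)ᴴ`), both
`L` and `-L` are QMS generators iff `L(A) = i(HA - AH)` for some self-adjoint `H`. -/
theorem qms_gen_both_iff_commutator (N : ℕ) (hN : 2 ≤ N)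
    (L : Mat N →ₗ[ℂ] Mat N) (hherm : ∀ A, L Aᴴ = (L A)ᴴ) :
    (IsQMSGen L ∧ IsQMSGen (-L)) ↔
      ∃ H : Mat N, H.IsHermitian ∧ ∀ A, L A = Complex.I • (H * A - A * H) := by
  constructor
  · rintro ⟨hL, hL'⟩
    have hdis := fun A => dissipation_zero L hL hL' A
    have hleib := leibniz L hherm hdis
    obtain ⟨K, hK⟩ := derivation_inner (by omega) L hleib
    exact herm_commutator (by omega) L hherm K hK
  · rintro ⟨H, hH, hLA⟩
    refine ⟨gen_of_comm H hH L hLA, ?_⟩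
    apply gen_of_comm (-H) hH.neg (-L)
    intro A
    rw [LinearMap.neg_apply, hLA A, ← smul_neg]
    congr 1
    rw [Matrix.neg_mul, Matrix.mul_neg]
    abel
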